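/- Let W ∈ ℝ^{n×n} be symmetric positive definite with W𝟙 = 𝟙 and let W^{1/2} be its positive-definite square root; let γ > 0 and each f_i be differentiable. Define Φ : ℝ^{n×d} → ℝ by Φ(S) = ∑_{i=1}^n f_i(row_i(W^{1/2}S)) + (1/(2γ)) tr(Sᵀ(I−W)S). Then (i) Φ is differentiable with ∇Φ(S) = W^{1/2}∇f(W^{1/2}S) + (1/γ)(I−W)S, and (ii) if X^{(k+1)} = W(X^{(k)} − γ∇f(X^{(k)})) (the full-batch DSGD recursion) and S^{(k)} := W^{−1/2}X^{(k)}, then S^{(k+1)} = S^{(k)} − γ∇Φ(S^{(k)}) for every k; i.e., DSGD is standard gradient descent on Φ. -/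

import Mathlib

open Finset
open scoped RealInnerProductSpace

noncomputable section

lemma matvec_assoc {n : ℕ} {V : Type*} [AddCommGroup V] [Module ℝ V]
    (A B : Matrix (Fin n) (Fin n) ℝ) (v : Fin n → V) (i : Fin n) :
    ∑ j, A i j • ∑ l, B j l • v l = ∑ l, (A * B) i l • v l := by
  simp only [Finset.smul_sum, Matrix.mul_apply, Finset.sum_smul, smul_smul]
  exact Finset.sum_comm

/-- **DSGD is standard gradient descent on a penalized objective.**
Let `W ∈ ℝ^{n×n}` be symmetric positive definite with `W𝟙 = 𝟙`, with positive-definite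
square root `Whalf` (`Whalf * Whalf = W`), and `γ > 0`.  With each `fi i` differentiable
with gradient `g i`, define `Φ(S) = ∑ i fi i (row_i (W^{1/2} S)) + (1/(2γ)) tr(Sᵀ(I-W)S)`
on the Frobenius inner-product space of `n×d` matrices (`PiLp 2` of rows).  Then:
(i) `Φ` has gradient `∇Φ(S) = W^{1/2} ∇f(W^{1/2} S) + (1/γ)(I-W) S` at every `S`, and
(ii) if `X^{(k+1)} = W(X^{(k)} - γ∇f(X^{(k)}))` (full-batch DSGD) and
`S^{(k)} = W^{-1/2} X^{(k)}`, then `S^{(k+1)} = S^{(k)} - γ ∇Φ(S^{(k)})` for every `k`. -/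
theorem dsgd_is_gradient_descent
    {n d : ℕ}
    (fi : Fin n → EuclideanSpace ℝ (Fin d) → ℝ)
    (g : Fin n → EuclideanSpace ℝ (Fin d) → EuclideanSpace ℝ (Fin d))
    (hgrad : ∀ i x, HasGradientAt (fi i) (g i x) x)
    (W : Matrix (Fin n) (Fin n) ℝ) (hWpd : W.PosDef)
    (hW1 : ∀ i, ∑ j, W i j = 1)
    (Whalf : Matrix (Fin n) (Fin n) ℝ) (hWhalfpd : Whalf.PosDef)
    (hWhalfsq : Whalf * Whalf = W)
    (γ : ℝ) (hγ : 0 < γ)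
    (Φ : PiLp 2 (fun _ : Fin n => EuclideanSpace ℝ (Fin d)) → ℝ)
    (hΦ : ∀ S, Φ S = (∑ i, fi i (∑ j, Whalf i j • S j))
        + (1 / (2 * γ)) * ∑ i, ∑ j, ((if i = j then (1 : ℝ) else 0) - W i j) * ⟪S i, S j⟫)
    (X : ℕ → Fin n → EuclideanSpace ℝ (Fin d))
    (hX : ∀ k i, X (k + 1) i = ∑ j, W i j • (X k j - γ • g j (X k j)))
    (S : ℕ → PiLp 2 (fun _ : Fin n => EuclideanSpace ℝ (Fin d)))
    (hS : ∀ k i, S k i = ∑ j, Whalf⁻¹ i j • X k j) :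
    (∀ Z : PiLp 2 (fun _ : Fin n => EuclideanSpace ℝ (Fin d)),
      HasGradientAt Φ
        (WithLp.toLp 2 (fun i => (∑ j, Whalf i j • g j (∑ l, Whalf j l • Z l))
          + γ⁻¹ • (Z i - ∑ j, W i j • Z j))) Z)
    ∧ (∀ k i, S (k + 1) i
        = S k i - γ • ((∑ j, Whalf i j • g j (∑ l, Whalf j l • S k l))
          + γ⁻¹ • (S k i - ∑ j, W i j • S k j))) := by
  refine ⟨?_, ?_⟩
  ·
    intro Z
    let E := PiLp 2 (fun _ : Fin n => EuclideanSpace ℝ (Fin d))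
    -- projection CLM
    set P : Fin n → (E →L[ℝ] EuclideanSpace ℝ (Fin d)) :=
      fun i => (ContinuousLinearMap.proj i).comp
        (PiLp.continuousLinearEquiv 2 ℝ (fun _ : Fin n => EuclideanSpace ℝ (Fin d))).toContinuousLinearMap
      with hPdef
    have hP : ∀ i (S : E), P i S = S i := fun _ _ => rfl
    set T : Fin n → (E →L[ℝ] EuclideanSpace ℝ (Fin d)) :=
      fun i => ∑ j, Whalf i j • P j with hTdef
    have hT : ∀ i (S : E), T i S = ∑ j, Whalf i j • S j := by
      intro i S
      simp [hTdef, hP, ContinuousLinearMap.sum_apply]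
    rw [hasGradientAt_iff_hasFDerivAt]
    have hΦ' : Φ = fun S => (∑ i, fi i (∑ j, Whalf i j • S j))
          + (1 / (2 * γ)) * ∑ i, ∑ j, ((if i = j then (1 : ℝ) else 0) - W i j) * ⟪S i, S j⟫ :=
      funext hΦ
    subst hΦ'
    -- derivative of first part
    have hF : HasFDerivAt (fun S : E => ∑ i, fi i (∑ j, Whalf i j • S j))
        (∑ i, ((InnerProductSpace.toDual ℝ (EuclideanSpace ℝ (Fin d)) (g i (T i Z))).comp (T i))) Z := by
      apply HasFDerivAt.fun_sum
      intro i _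
      have h1 := hasGradientAt_iff_hasFDerivAt.mp (hgrad i (T i Z))
      have h2 := h1.comp Z (T i).hasFDerivAt
      have heq : (fun S : E => fi i (∑ j, Whalf i j • S j)) = (fi i ∘ T i) := by
        funext S; simp [hT]
      rw [heq]; exact h2
    -- derivative of quadratic part
    have hQ : HasFDerivAt (fun S : E => (1 / (2 * γ)) * ∑ i, ∑ j,
          ((if i = j then (1 : ℝ) else 0) - W i j) * ⟪S i, S j⟫)
        ((1 / (2 * γ)) • ∑ i, ∑ j, ((if i = j then (1 : ℝ) else 0) - W i j) •
          ((fderivInnerCLM ℝ (Z i, Z j)).comp ((P i).prod (P j)))) Z := by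
      apply HasFDerivAt.const_mul
      apply HasFDerivAt.fun_sum
      intro i _
      apply HasFDerivAt.fun_sum
      intro j _
      exact (((P i).hasFDerivAt.inner ℝ (P j).hasFDerivAt).const_mul _)
    have hD := hF.add hQ
    refine hD.congr_fderiv ?_
    ext V
    have hWs : ∀ i j, Whalf i j = Whalf j i := by
      intro i j
      conv_lhs => rw [← hWhalfpd.1]
      simp [Matrix.conjTranspose_apply]
    have hWsym : ∀ i j, W i j = W j i := by
      intro i j
      conv_lhs => rw [← hWpd.1]
      simp [Matrix.conjTranspose_apply]
    have hM : ∀ i j, ((if i = j then (1:ℝ) else 0) - W i j)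
        = ((if j = i then (1:ℝ) else 0) - W j i) := by
      intro i j; rw [hWsym]; congr 1; simp [eq_comm]
    simp only [ContinuousLinearMap.add_apply, ContinuousLinearMap.coe_sum', Finset.sum_apply,
      ContinuousLinearMap.coe_smul', Pi.smul_apply, ContinuousLinearMap.coe_comp', Function.comp_apply,
      InnerProductSpace.toDual_apply_apply, fderivInnerCLM_apply,
      ContinuousLinearMap.prod_apply, hP, hT, smul_eq_mul]
    rw [InnerProductSpace.toDual_apply_apply, PiLp.inner_apply]
    simp only [WithLp.ofLp_toLp]
    set y : Fin n → EuclideanSpace ℝ (Fin d) := fun j => g j (∑ l, Whalf j l • Z l) with hy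
    have e1 : ∑ i, ⟪y i, ∑ j, Whalf i j • V j⟫ = ∑ i, ∑ j, Whalf i j * ⟪y j, V i⟫ := by
      simp_rw [inner_sum, real_inner_smul_right]
      rw [Finset.sum_comm]
      exact Finset.sum_congr rfl fun i _ => Finset.sum_congr rfl fun j _ => by rw [hWs i j]
    have swap1 : ∑ i, ∑ j, ((if i = j then (1:ℝ) else 0) - W i j) * ⟪Z i, V j⟫
        = ∑ i, ∑ j, ((if i = j then (1:ℝ) else 0) - W i j) * ⟪Z j, V i⟫ := by
      rw [Finset.sum_comm]
      exact Finset.sum_congr rfl fun i _ => Finset.sum_congr rfl fun j _ => by rw [hM j i]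
    have erow : ∀ i, ∑ j, ((if i = j then (1:ℝ) else 0) - W i j) * ⟪Z j, V i⟫
        = ⟪Z i, V i⟫ - ∑ j, W i j * ⟪Z j, V i⟫ := by
      intro i
      simp [sub_mul, Finset.sum_sub_distrib, ite_mul, Finset.sum_ite_eq]
    have swap2 : ∑ i, ∑ j, ((if i = j then (1:ℝ) else 0) - W i j) * ⟪V i, Z j⟫
        = ∑ i, ∑ j, ((if i = j then (1:ℝ) else 0) - W i j) * ⟪Z j, V i⟫ := by
      refine Finset.sum_congr rfl fun i _ => Finset.sum_congr rfl fun j _ => ?_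
      rw [real_inner_comm]
    have e2 : (1/(2*γ)) * (∑ i, ∑ j, ((if i = j then (1:ℝ) else 0) - W i j)
          * (⟪Z i, V j⟫ + ⟪V i, Z j⟫))
        = ∑ i, γ⁻¹ * (⟪Z i, V i⟫ - ∑ j, W i j * ⟪Z j, V i⟫) := by
      have h2 : (∑ i, ∑ j, ((if i = j then (1:ℝ) else 0) - W i j)
            * (⟪Z i, V j⟫ + ⟪V i, Z j⟫))
          = 2 * ∑ i, ∑ j, ((if i = j then (1:ℝ) else 0) - W i j) * ⟪Z j, V i⟫ := by
        simp_rw [mul_add]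
        simp_rw [Finset.sum_add_distrib]
        rw [swap1, swap2, two_mul]
      have h3 : (1/(2*γ)) * 2 = γ⁻¹ := by field_simp
      rw [h2, ← mul_assoc, h3, Finset.mul_sum]
      exact Finset.sum_congr rfl fun i _ => by rw [erow i]
    rw [e1, e2]
    rw [← Finset.sum_add_distrib]
    refine Finset.sum_congr rfl fun i _ => ?_
    rw [inner_add_left, real_inner_smul_left, inner_sub_left, sum_inner, sum_inner]
    simp_rw [real_inner_smul_left]
    rfl
  ·
    have hdet : IsUnit Whalf.det := (Matrix.isUnit_iff_isUnit_det _).mp hWhalfpd.isUnit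
    have hXk : ∀ k j, X k j = ∑ l, Whalf j l • S k l := by
      intro k j
      have h1 : ∑ l, Whalf j l • S k l = ∑ m, (Whalf * Whalf⁻¹) j m • X k m := by
        simp_rw [hS k]; exact matvec_assoc _ _ _ _
      rw [h1, Matrix.mul_nonsing_inv _ hdet]
      simp [Matrix.one_apply, ite_smul]
    intro k i
    have hWS : ∀ k i, ∑ l, Whalf i l • X k l = ∑ m, W i m • S k m := by
      intro k i
      calc ∑ l, Whalf i l • X k l = ∑ l, Whalf i l • ∑ m, Whalf l m • S k m := by
            simp_rw [← hXk]
        _ = ∑ m, W i m • S k m := by rw [matvec_assoc, hWhalfsq]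
    have hL : S (k+1) i = ∑ l, Whalf i l • (X k l - γ • g l (X k l)) := by
      rw [hS]
      simp_rw [hX k]
      rw [matvec_assoc]
      have : Whalf⁻¹ * W = Whalf := by
        rw [← hWhalfsq, ← mul_assoc, Matrix.nonsing_inv_mul _ hdet, one_mul]
      rw [this]
    rw [hL]
    simp only [smul_sub, Finset.sum_sub_distrib]
    rw [hWS]
    simp_rw [← hXk, smul_add, smul_sub, smul_smul, mul_inv_cancel₀ hγ.ne', one_smul,
      Finset.smul_sum, smul_smul, mul_comm γ (Whalf i _)]
    abel
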